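/- arXiv:2111.07050 — 2 statements merged into one kernel-verified Lean document; each statement's English description precedes it below -/
import Mathlib

section
/- Let G be a d-connected graph and let D = E(X, X̄) be a nontrivial minimum edge cut of G, for some X ⊆ V(G). Then the number of vertices of X incident with an edge of D is at least d, and the number of vertices of V(G)∖X incident with an edge of D is at least d. -/
noncomputable section

/-- Abbreviation for Euclidean space `ℝ^n`. -/
abbrev Euc (n : ℕ) := EuclideanSpace ℝ (Fin n)

/-- A polytope is the convex hull of a finite set of points. -/
def IsPolytope {n : ℕ} (P : Set (Euc n)) : Prop :=
  ∃ S : Finset (Euc n), P = convexHull ℝ (S : Set (Euc n))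

/-- The dimension of a set of points: the dimension of its affine span. -/
noncomputable def polyDim {n : ℕ} (P : Set (Euc n)) : ℕ :=
  Module.finrank ℝ (affineSpan ℝ P).direction

/-- `F` is an (exposed) face of `P`: `P` itself, or the intersection of `P` with
a hyperplane that has `P` in one of its closed halfspaces. -/
def IsFaceOf {n : ℕ} (P F : Set (Euc n)) : Prop :=
  F = P ∨ ∃ (f : Euc n →ₗ[ℝ] ℝ) (c : ℝ), f ≠ 0 ∧ (∀ x ∈ P, f x ≤ c) ∧
    F = {x ∈ P | f x = c}

/-- A vertex of `P`: a point whose singleton is a (0-dimensional) face of `P`. -/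
def IsVertexOf {n : ℕ} (P : Set (Euc n)) (v : Euc n) : Prop :=
  IsFaceOf P {v}

/-- A facet of `P`: a nonempty face of dimension one less than that of `P`. -/
def IsFacetOf {n : ℕ} (P F : Set (Euc n)) : Prop :=
  IsFaceOf P F ∧ F.Nonempty ∧ polyDim F + 1 = polyDim P

/-- A simplicial `d`-polytope: a polytope of dimension `d` each of whose facets has
exactly `d` vertices. -/
def IsSimplicialPolytope {n : ℕ} (P : Set (Euc n)) (d : ℕ) : Prop :=
  IsPolytope P ∧ polyDim P = d ∧
    ∀ F, IsFacetOf P F → {v | IsVertexOf F v}.ncard = d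

/-- The graph of a polytope `P`: vertices are the vertices of `P`, two of them being
adjacent exactly when the segment joining them is an edge (1-dimensional face) of `P`. -/
def polytopeGraph {n : ℕ} (P : Set (Euc n)) :
    SimpleGraph {v : Euc n // IsVertexOf P v} where
  Adj x y := x ≠ y ∧ IsFaceOf P (segment ℝ (x : Euc n) (y : Euc n))
  symm := by
    constructor
    rintro x y ⟨hxy, hseg⟩
    refine ⟨hxy.symm ∘ Eq.symm ∘ Eq.symm, ?_⟩
    · rwa [segment_symm]
  loopless := by constructor; rintro x ⟨hxx, _⟩; exact hxx rfl

/-- `E(X, X̄)`: the set of edges of `G` with one endpoint in `X` and the other outside `X`. -/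
def cutEdges {V : Type*} (G : SimpleGraph V) (X : Set V) : Set (Sym2 V) :=
  {e | ∃ x y, G.Adj x y ∧ x ∈ X ∧ y ∉ X ∧ e = s(x, y)}

/-- An edge cut of `G`: a set of edges of the form `E(X, X̄)` for a nonempty proper
subset `X` of the vertices, whose removal separates two vertices of `G`. -/
def IsEdgeCut {V : Type*} (G : SimpleGraph V) (D : Set (Sym2 V)) : Prop :=
  ∃ X : Set V, X.Nonempty ∧ Xᶜ.Nonempty ∧ D = cutEdges G X ∧
    ∃ x y : V, ¬ (G.deleteEdges D).Reachable x y

/-- A minimum edge cut: an edge cut of least cardinality. -/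
def IsMinEdgeCut {V : Type*} (G : SimpleGraph V) (D : Set (Sym2 V)) : Prop :=
  IsEdgeCut G D ∧ ∀ D' : Set (Sym2 V), IsEdgeCut G D' → D.ncard ≤ D'.ncard

/-- A trivial edge cut: the set of all edges incident with a single vertex. -/
def IsTrivialEdgeCut {V : Type*} (G : SimpleGraph V) (D : Set (Sym2 V)) : Prop :=
  ∃ v : V, D = G.incidenceSet v

/-- `G` is `r`-edge-connected: no two vertices are separated by removing fewer than
`r` edges. -/
def EdgeConnectedGE {V : Type*} (G : SimpleGraph V) (r : ℕ) : Prop :=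
  ∀ D : Finset (Sym2 V), D.card < r →
    ∀ x y : V, (G.deleteEdges (D : Set (Sym2 V))).Reachable x y

/-- The set of vertices incident with an edge of `D`. -/
def cutVerts {V : Type*} (D : Set (Sym2 V)) : Set V :=
  {v | ∃ e ∈ D, v ∈ e}

/-- A graph with at least `d + 1` vertices is `d`-connected if removing any `d - 1`
vertices leaves a connected subgraph. -/
def IsKConnected {V : Type*} [Fintype V] (G : SimpleGraph V) (d : ℕ) : Prop :=
  d + 1 ≤ Fintype.card V ∧
    ∀ S : Set V, S.ncard = d - 1 → (G.induce (Sᶜ : Set V)).Connected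


section Aux

variable {V : Type*}

private lemma lift_reach {G : SimpleGraph V} {Y : Set V} {a b : Y}
    (h : (G.induce Y).Reachable a b) : G.Reachable (a : V) (b : V) :=
  h.map (SimpleGraph.Embedding.induce Y).toHom

private lemma walk_cross {G : SimpleGraph V} {X Y : Set V} :
    ∀ {a b : Y}, (G.induce Y).Walk a b → (a : V) ∈ X → (b : V) ∉ X →
      ∃ p q : V, G.Adj p q ∧ p ∈ X ∧ q ∉ X ∧ p ∈ Y := by
  intro a b w
  induction w with
  | nil => intro h1 h2; exact absurd h1 h2
  | @cons u c b h p ih =>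
    intro ha hb
    by_cases hc : (c : V) ∈ X
    · exact ih hc hb
    · exact ⟨u, c, h, ha, hc, u.2⟩

private lemma pad [Fintype V] {d : ℕ} (hcard : d + 1 ≤ Fintype.card V)
    (S : Set V) (hS : S.ncard ≤ d - 1) (u v : V) (hu : u ∉ S) (hv : v ∉ S) :
    ∃ S' : Set V, S ⊆ S' ∧ S'.ncard = d - 1 ∧ u ∉ S' ∧ v ∉ S' := by
  classical
  have h1 : (S ∪ {u, v}).ncard ≤ S.ncard + 2 := by
    calc (S ∪ {u, v}).ncard ≤ S.ncard + ({u, v} : Set V).ncard := Set.ncard_union_le _ _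
      _ ≤ S.ncard + 2 := by
          have : ({u, v} : Set V).ncard ≤ 2 := by
            have := Set.ncard_insert_le u ({v} : Set V)
            simpa [Set.ncard_singleton] using this
          omega
  have h2 : (S ∪ {u, v}).ncard + (S ∪ {u, v})ᶜ.ncard = Nat.card V :=
    Set.ncard_add_ncard_compl _
  have hc : Nat.card V = Fintype.card V := Nat.card_eq_fintype_card
  have h3 : d - 1 - S.ncard ≤ ((S ∪ {u, v})ᶜ).ncard := by omega
  obtain ⟨T', hT'sub, hT'card⟩ := Set.exists_subset_card_eq h3
  have hdisj : Disjoint S T' := by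
    rw [Set.disjoint_left]
    intro x hxS hxT
    exact (hT'sub hxT) (Or.inl hxS)
  refine ⟨S ∪ T', Set.subset_union_left, ?_, ?_, ?_⟩
  · rw [Set.ncard_union_eq hdisj (Set.toFinite S) (Set.toFinite T')]
    omega
  · rintro (h | h)
    · exact hu h
    · exact (hT'sub h) (Or.inr (Or.inl rfl))
  · rintro (h | h)
    · exact hv h
    · exact (hT'sub h) (Or.inr (Or.inr rfl))

private lemma gpreconn [Fintype V] {G : SimpleGraph V} {d : ℕ}
    (hconn : IsKConnected G d) : G.Preconnected := by
  intro u v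
  obtain ⟨S', -, hcardS, hu, hv⟩ := pad hconn.1 ∅ (by simp) u v (by simp) (by simp)
  exact lift_reach ((hconn.2 S' hcardS).preconnected ⟨u, hu⟩ ⟨v, hv⟩)

private lemma mindeg [Fintype V] {G : SimpleGraph V} {d : ℕ}
    (hconn : IsKConnected G d) (v : V) : d ≤ (G.neighborSet v).ncard := by
  by_contra hlt
  push_neg at hlt
  have h : (G.neighborSet v).ncard ≤ d - 1 := by omega
  obtain ⟨S', hsub, hcardS, hv', -⟩ :=
    pad hconn.1 _ h v v (G.notMem_neighborSet_self) (G.notMem_neighborSet_self)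
  have hne : (S' ∪ {v} : Set V) ≠ Set.univ := by
    intro hun
    have h4 : (S' ∪ {v}).ncard ≤ S'.ncard + ({v} : Set V).ncard := Set.ncard_union_le _ _
    rw [hun, Set.ncard_univ, Nat.card_eq_fintype_card] at h4
    rw [Set.ncard_singleton] at h4
    have := hconn.1
    omega
  obtain ⟨w, hw⟩ := (Set.ne_univ_iff_exists_notMem _).mp hne
  have hwS : w ∉ S' := fun h => hw (Or.inl h)
  have hwv : w ≠ v := fun h => hw (Or.inr h)
  obtain ⟨p⟩ := (hconn.2 S' hcardS).preconnected ⟨v, hv'⟩ ⟨w, hwS⟩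
  cases p with
  | nil => exact hwv rfl
  | cons hadj p' =>
    rename_i c
    exact c.2 (hsub hadj)

private lemma cutEdges_compl (G : SimpleGraph V) (X : Set V) :
    cutEdges G Xᶜ = cutEdges G X := by
  ext e
  constructor
  · rintro ⟨x, y, hadj, hx, hy, rfl⟩
    exact ⟨y, x, hadj.symm, not_not.mp hy, hx, Sym2.eq_swap⟩
  · rintro ⟨x, y, hadj, hx, hy, rfl⟩
    exact ⟨y, x, hadj.symm, hy, not_not_intro hx, Sym2.eq_swap⟩

private lemma cutEdges_singleton (G : SimpleGraph V) (a : V) :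
    cutEdges G ({a} : Set V) = G.incidenceSet a := by
  ext e
  constructor
  · rintro ⟨x, y, hadj, hx, hy, rfl⟩
    rcases hx with rfl
    exact ⟨hadj, Sym2.mem_mk_left _ _⟩
  · induction e using Sym2.inductionOn with
    | hf x y =>
      rintro ⟨he, hae⟩
      rw [SimpleGraph.mem_edgeSet] at he
      rcases Sym2.mem_iff.mp hae with hax | hay
      · exact ⟨x, y, he, hax.symm, fun h => he.ne' ((Set.mem_singleton_iff.mp h).trans hax), rfl⟩
      · exact ⟨y, x, he.symm, hay.symm,
          fun h => he.ne ((Set.mem_singleton_iff.mp h).trans hay), Sym2.eq_swap⟩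

private lemma trivial_cut_ncard (G : SimpleGraph V) (a : V) :
    (cutEdges G ({a} : Set V)).ncard = (G.neighborSet a).ncard := by
  have himg : cutEdges G ({a} : Set V) = (fun y => s(a, y)) '' G.neighborSet a := by
    ext e
    constructor
    · rintro ⟨x, y, hadj, hx, hy, rfl⟩
      rcases hx with rfl
      exact ⟨y, hadj, rfl⟩
    · rintro ⟨y, hy, rfl⟩
      exact ⟨a, y, hy, rfl, fun h => hy.ne' h, rfl⟩
  rw [himg, Set.ncard_image_of_injOn]
  exact fun x _ y _ h => Sym2.congr_right.mp h

private lemma trivial_isEdgeCut [Fintype V] {G : SimpleGraph V} (a : V)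
    (hcard : 2 ≤ Fintype.card V) : IsEdgeCut G (cutEdges G ({a} : Set V)) := by
  obtain ⟨w, hw⟩ := Fintype.exists_ne_of_one_lt_card (by omega) a
  refine ⟨{a}, ⟨a, rfl⟩, ⟨w, hw⟩, rfl, a, w, ?_⟩
  rintro ⟨p⟩
  cases p with
  | nil => exact hw rfl
  | cons h p' =>
    rename_i c
    rw [SimpleGraph.deleteEdges_adj] at h
    exact h.2 ⟨a, c, h.1, rfl, fun hc => G.loopless.irrefl a (hc ▸ h.1), rfl⟩

private lemma main_half [Fintype V] {G : SimpleGraph V} {d : ℕ}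
    (hconn : IsKConnected G d) (X : Set V) (D : Set (Sym2 V)) (hDX : D = cutEdges G X)
    (hmin : IsMinEdgeCut G D) (hnt : ¬ IsTrivialEdgeCut G D) :
    d ≤ (X ∩ cutVerts D).ncard := by
  classical
  by_contra hk
  push_neg at hk
  have hcard := hconn.1
  -- D is nonempty
  obtain ⟨X₀, -, -, -, x₀, y₀, hsep⟩ := hmin.1
  have hDne : D.Nonempty := by
    rcases Set.eq_empty_or_nonempty D with rfl | h
    · rw [SimpleGraph.deleteEdges_empty] at hsep
      exact absurd (gpreconn hconn x₀ y₀) hsep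
    · exact h
  obtain ⟨e, heD⟩ := hDne
  have heD' := heD
  rw [hDX] at heD'
  obtain ⟨a, b, hab, haX, hbX, rfl⟩ := heD'
  have hcross : ∀ p q : V, G.Adj p q → p ∈ X → q ∉ X → p ∈ X ∩ cutVerts D :=
    fun p q hadj hp hq =>
      ⟨hp, s(p, q), by rw [hDX]; exact ⟨p, q, hadj, hp, hq, rfl⟩, Sym2.mem_mk_left _ _⟩
  have haA : a ∈ X ∩ cutVerts D := hcross a b hab haX hbX
  by_cases hXA : ∃ u ∈ X, u ∉ X ∩ cutVerts D
  · -- Case 1: some vertex of X is not incident with the cut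
    obtain ⟨u, huX, huA⟩ := hXA
    have hbA : b ∉ X ∩ cutVerts D := fun h => hbX h.1
    have hAcard : (X ∩ cutVerts D).ncard ≤ d - 1 := by omega
    obtain ⟨S', hsub, hScard, huS, hbS⟩ := pad hcard _ hAcard u b huA hbA
    obtain ⟨w⟩ := (hconn.2 S' hScard).preconnected ⟨u, huS⟩ ⟨b, hbS⟩
    obtain ⟨p, q, hadj, hpX, hqX, hpY⟩ := walk_cross w huX hbX
    exact hpY (hsub (hcross p q hadj hpX hqX))
  · -- Case 2: X ⊆ cutVerts D
    push_neg at hXA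
    have hAX : X ∩ cutVerts D = X := by
      apply Set.inter_eq_self_of_subset_left
      intro u huX
      exact (hXA u huX).2
    rw [hAX] at hk haA hcross
    set k := X.ncard with hkdef
    have hd1 : 1 ≤ d := by omega
    have hk1 : 1 ≤ k := by
      rw [hkdef]
      exact (Set.ncard_pos (Set.toFinite X)).mpr ⟨a, haX⟩
    rcases eq_or_lt_of_le hk1 with hk1' | hk2
    · -- |X| = 1 : the cut is trivial, contradiction
      obtain ⟨z, hz⟩ := Set.ncard_eq_one.mp hk1'.symm
      have hza : z = a := by
        rw [hz] at haX
        exact (Set.mem_singleton_iff.mp haX).symm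
      apply hnt
      refine ⟨a, ?_⟩
      rw [hDX, hz, hza, cutEdges_singleton]
    · -- |X| ≥ 2 : counting argument
      have hVc : 2 ≤ Fintype.card V := by omega
      have hminD : D.ncard ≤ (G.neighborSet a).ncard := by
        have := hmin.2 _ (trivial_isEdgeCut a hVc)
        rwa [trivial_cut_ncard] at this
      -- Finset setup
      set Xf : Finset V := (Set.toFinite X).toFinset with hXf
      have hXfmem : ∀ x, x ∈ Xf ↔ x ∈ X := fun x => Set.Finite.mem_toFinset _
      have hXfcard : Xf.card = k := (Set.ncard_eq_toFinset_card X (Set.toFinite X)).symm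
      set Pf : Finset (V × V) :=
        Finset.univ.filter (fun p => p.1 ∈ X ∧ G.Adj p.1 p.2 ∧ p.2 ∉ X) with hPf
      have hPfmem : ∀ p : V × V, p ∈ Pf ↔ p.1 ∈ X ∧ G.Adj p.1 p.2 ∧ p.2 ∉ X := by
        intro p; simp [hPf]
      set Ef : V → Finset V :=
        fun x => Finset.univ.filter (fun y => G.Adj x y ∧ y ∉ X) with hEf
      have hEfmem : ∀ x y, y ∈ Ef x ↔ G.Adj x y ∧ y ∉ X := by
        intro x y; simp [hEf]
      -- |D| ≥ |Pf|
      have hPD : Pf.card ≤ D.ncard := by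
        have himg : (fun p : V × V => s(p.1, p.2)) '' ↑Pf ⊆ D := by
          rintro e ⟨p, hp, rfl⟩
          rw [Finset.mem_coe, hPfmem] at hp
          rw [hDX]
          exact ⟨p.1, p.2, hp.2.1, hp.1, hp.2.2, rfl⟩
        have hinj : Set.InjOn (fun p : V × V => s(p.1, p.2)) ↑Pf := by
          intro p hp q hq hpq
          rw [Finset.mem_coe, hPfmem] at hp hq
          rcases Sym2.eq_iff.mp hpq with ⟨h1, h2⟩ | ⟨h1, h2⟩
          · exact Prod.ext h1 h2
          · exact absurd (h1 ▸ hp.1) hq.2.2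
        calc Pf.card = (↑Pf : Set (V × V)).ncard := (Set.ncard_coe_finset _).symm
          _ = ((fun p : V × V => s(p.1, p.2)) '' ↑Pf).ncard :=
              (Set.ncard_image_of_injOn hinj).symm
          _ ≤ D.ncard := Set.ncard_le_ncard himg (Set.toFinite D)
      -- |Pf| = sum of fibers
      have hfiber : Pf.card = ∑ x ∈ Xf, (Ef x).card := by
        rw [Finset.card_eq_sum_card_fiberwise
          (f := Prod.fst) (t := Xf) (fun p hp => (hXfmem _).mpr ((hPfmem p).mp hp).1)]
        apply Finset.sum_congr rfl
        intro x hx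
        refine Finset.card_bij' (fun p _ => p.2) (fun y _ => (x, y)) ?_ ?_ ?_ ?_
        · intro p hp
          rw [Finset.mem_filter] at hp
          rw [hEfmem]
          have hpp := (hPfmem p).mp hp.1
          rw [hp.2] at hpp
          exact ⟨hpp.2.1, hpp.2.2⟩
        · intro y hy
          rw [hEfmem] at hy
          rw [Finset.mem_filter, hPfmem]
          exact ⟨⟨(hXfmem x).mp hx, hy.1, hy.2⟩, rfl⟩
        · intro p hp
          rw [Finset.mem_filter] at hp
          exact Prod.ext hp.2.symm rfl
        · intro y hy
          rfl
      -- degree bound for each x ∈ X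
      have hdegbound : ∀ x ∈ X, (G.neighborSet x).ncard ≤ (Ef x).card + (k - 1) := by
        intro x hxX
        have hsplit : G.neighborSet x = (G.neighborSet x \ X) ∪ (G.neighborSet x ∩ X) := by
          ext y
          by_cases hy : y ∈ X <;> simp [hy]
        have h1 : (G.neighborSet x \ X).ncard = (Ef x).card := by
          rw [← Set.ncard_coe_finset (Ef x)]
          congr 1
          ext y
          rw [Finset.mem_coe, hEfmem]
          simp [SimpleGraph.mem_neighborSet]
        have h2 : (G.neighborSet x ∩ X).ncard ≤ k - 1 := by
          have hsub2 : G.neighborSet x ∩ X ⊆ X \ {x} := by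
            rintro y ⟨hy1, hy2⟩
            exact ⟨hy2, fun h => G.loopless.irrefl x (h ▸ hy1)⟩
          calc (G.neighborSet x ∩ X).ncard ≤ (X \ {x}).ncard :=
                Set.ncard_le_ncard hsub2 (Set.toFinite _)
            _ = k - 1 := by rw [Set.ncard_diff_singleton_of_mem hxX]
        calc (G.neighborSet x).ncard
            = (G.neighborSet x \ X ∪ G.neighborSet x ∩ X).ncard := by rw [← hsplit]
          _ ≤ (G.neighborSet x \ X).ncard + (G.neighborSet x ∩ X).ncard :=
              Set.ncard_union_le _ _
          _ ≤ (Ef x).card + (k - 1) := by rw [h1]; omega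
      -- each Ef x has at least 2 elements, for x ∈ X
      have hEf2 : ∀ x ∈ X, 2 ≤ (Ef x).card := by
        intro x hxX
        have hdeg := mindeg hconn x
        have := hdegbound x hxX
        omega
      -- sum lower bound
      have hsum : (Ef a).card + 2 * (k - 1) ≤ ∑ x ∈ Xf, (Ef x).card := by
        have haXf : a ∈ Xf := (hXfmem a).mpr haX
        rw [← Finset.add_sum_erase _ _ haXf]
        have herase : (Xf.erase a).card = k - 1 := by
          rw [Finset.card_erase_of_mem haXf, hXfcard]
        have h2 : (Xf.erase a).card * 2 ≤ ∑ x ∈ Xf.erase a, (Ef x).card := by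
          rw [← smul_eq_mul]
          apply Finset.card_nsmul_le_sum
          intro x hx
          exact hEf2 x ((hXfmem x).mp (Finset.mem_of_mem_erase hx))
        omega
      have hdega := hdegbound a haX
      omega

end Aux

/-- If `G` is a `d`-connected graph and `D = E(X, X̄)` is a nontrivial
minimum edge cut of `G`, then at least `d` vertices of `X` and at least `d` vertices of
`V(G) ∖ X` are incident with edges of `D`. -/
theorem edge_cut_small {V : Type*} [Fintype V] (G : SimpleGraph V) (d : ℕ)
    (hconn : IsKConnected G d)
    (X : Set V) (D : Set (Sym2 V)) (hDX : D = cutEdges G X)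
    (hmin : IsMinEdgeCut G D) (hnt : ¬ IsTrivialEdgeCut G D) :
    d ≤ (X ∩ cutVerts D).ncard ∧ d ≤ (Xᶜ ∩ cutVerts D).ncard := by
  refine ⟨main_half hconn X D hDX hmin hnt, main_half hconn Xᶜ D ?_ hmin hnt⟩
  rw [hDX, cutEdges_compl]

end
end

section
/- Let d ≥ 4, let G be a graph, and let D = E(X, X̄) be an edge cut of G with |D| ≤ 4d − 7 such that at least d vertices of X are incident with edges of D and at least d vertices of V(G)∖X are incident with edges of D. Then there is a vertex w ∈ X incident with an edge of D such that w has at least 1 and at most d − 2 neighbours in V(G)∖X; similarly, there is a vertex z ∈ V(G)∖X incident with an edge of D such that z has at least 1 and at most d − 2 neighbours in X. -/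
noncomputable section

lemma aux_count {V : Type*} [Fintype V] (G : SimpleGraph V) (d : ℕ) (hd : 4 ≤ d)
    (A : Set V) (D : Set (Sym2 V))
    (hin : ∀ w ∈ A, ∀ y, G.Adj w y → y ∉ A → s(w, y) ∈ D)
    (hne : ∀ w ∈ A ∩ cutVerts D, (G.neighborSet w ∩ Aᶜ).Nonempty)
    (hcard : D.ncard ≤ 4 * d - 7)
    (hA : d ≤ (A ∩ cutVerts D).ncard) :
    ∃ w ∈ A ∩ cutVerts D,
      1 ≤ (G.neighborSet w ∩ Aᶜ).ncard ∧ (G.neighborSet w ∩ Aᶜ).ncard ≤ d - 2 := by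
  classical
  by_contra h
  push_neg at h
  have key : ∀ w ∈ A ∩ cutVerts D, d - 1 ≤ (G.neighborSet w ∩ Aᶜ).ncard := by
    intro w hw
    have h1 : 1 ≤ (G.neighborSet w ∩ Aᶜ).ncard :=
      (Set.ncard_pos (Set.toFinite _)).2 (hne w hw)
    have h2 := h w hw h1
    omega
  set S : Finset V := (A ∩ cutVerts D).toFinset with hS
  set f : V → Finset (Sym2 V) :=
    fun w => ((G.neighborSet w ∩ Aᶜ).toFinset).image (fun y => s(w, y)) with hf
  have hcardf : ∀ w, (f w).card = (G.neighborSet w ∩ Aᶜ).ncard := by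
    intro w
    rw [hf]
    rw [Finset.card_image_of_injOn, Set.ncard_eq_toFinset_card']
    intro y hy y' hy' hyy'
    simp only [Finset.mem_coe, Set.mem_toFinset, Set.mem_inter_iff,
      SimpleGraph.mem_neighborSet] at hy hy'
    rcases Sym2.eq_iff.1 hyy' with ⟨_, h2⟩ | ⟨h1, h2⟩
    · exact h2
    · exact absurd h2.symm hy.1.ne
  have hsub : S.biUnion f ⊆ D.toFinset := by
    intro e he
    simp only [Finset.mem_biUnion, hf, Finset.mem_image, Set.mem_toFinset, hS,
      Set.mem_inter_iff, SimpleGraph.mem_neighborSet] at he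
    obtain ⟨w, ⟨hwA, -⟩, y, ⟨hadj, hyA⟩, rfl⟩ := he
    exact Set.mem_toFinset.2 (hin w hwA y hadj hyA)
  have hdisj : ∀ w ∈ S, ∀ w' ∈ S, w ≠ w' → Disjoint (f w) (f w') := by
    intro w hw w' hw' hww'
    simp only [hS, Set.mem_toFinset, Set.mem_inter_iff] at hw hw'
    rw [Finset.disjoint_left]
    intro e he he'
    simp only [hf, Finset.mem_image, Set.mem_toFinset, Set.mem_inter_iff,
      SimpleGraph.mem_neighborSet] at he he'
    obtain ⟨y, ⟨-, hyA⟩, rfl⟩ := he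
    obtain ⟨y', ⟨-, hy'A⟩, heq⟩ := he'
    rcases Sym2.eq_iff.1 heq with ⟨h1, -⟩ | ⟨h1, h2⟩
    · exact hww' h1.symm
    · exact hy'A (by rw [h2]; exact hw.1)
  have hsum : S.card * (d - 1) ≤ (S.biUnion f).card := by
    rw [Finset.card_biUnion hdisj]
    calc S.card * (d - 1) = ∑ _w ∈ S, (d - 1) := by
          rw [Finset.sum_const, smul_eq_mul]
        _ ≤ ∑ w ∈ S, (f w).card := by
          apply Finset.sum_le_sum
          intro w hw
          rw [hcardf]
          exact key w (by simpa [hS, Set.mem_toFinset] using hw)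
  have hScard : d ≤ S.card := by
    rwa [hS, ← Set.ncard_eq_toFinset_card']
  have hD : (S.biUnion f).card ≤ D.ncard := by
    rw [Set.ncard_eq_toFinset_card']
    exact Finset.card_le_card hsub
  have : d * (d - 1) ≤ 4 * d - 7 := le_trans
    (le_trans (Nat.mul_le_mul_right _ hScard) hsum) (le_trans hD hcard)
  obtain ⟨e, rfl⟩ : ∃ e, d = e + 4 := ⟨d - 4, by omega⟩
  have h3 : (e + 4) * (e + 3) ≤ 4 * e + 9 := by
    calc (e + 4) * (e + 3) = (e + 4) * (e + 4 - 1) := by congr 1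
      _ ≤ 4 * (e + 4) - 7 := this
      _ = 4 * e + 9 := by omega
  nlinarith


/-- Let `d ≥ 4` and let `D = E(X, X̄)` be an edge cut of a finite graph `G`
with `|D| ≤ 4d - 7` such that at least `d` vertices of `X` and at least `d` vertices of
`V(G) ∖ X` are incident with edges of `D`. Then some vertex `w ∈ X` incident with an edge
of `D` has at least `1` and at most `d - 2` neighbours in `V(G) ∖ X`, and some vertex
`z ∈ V(G) ∖ X` incident with an edge of `D` has at least `1` and at most `d - 2`
neighbours in `X`. -/
theorem exists_vertex_few_cross_neighbours {V : Type*} [Fintype V]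
    (G : SimpleGraph V) (d : ℕ) (hd : 4 ≤ d)
    (X : Set V) (D : Set (Sym2 V)) (hDX : D = cutEdges G X)
    (hcut : IsEdgeCut G D) (hcard : D.ncard ≤ 4 * d - 7)
    (hX : d ≤ (X ∩ cutVerts D).ncard) (hXc : d ≤ (Xᶜ ∩ cutVerts D).ncard) :
    (∃ w ∈ X ∩ cutVerts D,
      1 ≤ (G.neighborSet w ∩ Xᶜ).ncard ∧ (G.neighborSet w ∩ Xᶜ).ncard ≤ d - 2) ∧
    (∃ z ∈ Xᶜ ∩ cutVerts D,
      1 ≤ (G.neighborSet z ∩ X).ncard ∧ (G.neighborSet z ∩ X).ncard ≤ d - 2) := by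
  classical
  constructor
  · apply aux_count G d hd X D ?_ ?_ hcard hX
    · intro w hw y hadj hy
      rw [hDX]
      exact ⟨w, y, hadj, hw, hy, rfl⟩
    · rintro w ⟨hwX, e, heD, hwe⟩
      rw [hDX] at heD
      obtain ⟨x, y, hadj, hxX, hyX, rfl⟩ := heD
      rcases Sym2.mem_iff.1 hwe with rfl | rfl
      · exact ⟨y, hadj, hyX⟩
      · exact absurd hwX hyX
  · have h := aux_count G d hd Xᶜ D ?_ ?_ hcard hXc
    · simpa [compl_compl] using h
    · intro w hw y hadj hy
      rw [hDX]
      rw [Set.notMem_compl_iff] at hy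
      exact ⟨y, w, hadj.symm, hy, hw, Sym2.eq_swap⟩
    · rintro w ⟨hwX, e, heD, hwe⟩
      rw [hDX] at heD
      obtain ⟨x, y, hadj, hxX, hyX, rfl⟩ := heD
      rcases Sym2.mem_iff.1 hwe with rfl | rfl
      · exact absurd hxX hwX
      · exact ⟨x, hadj.symm, by simpa using hxX⟩

end
end
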